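/- Let M be a DFA with n ≥ 2 states accepting L, and suppose L is not subword-free. Then there exists a witness (u, w) with u a proper subword of w, u ∈ L, w ∈ L, and |w| ≤ 2n − 1. -/

import Mathlib

def SubwordFree {α : Type*} (L : Set (List α)) : Prop :=
  ∀ u ∈ L, ∀ w ∈ L, u.Sublist w → u = w

private lemma pump_down {α σ : Type*} [Fintype σ] (M : DFA α σ) {w : List α}
    (hw : w ∈ M.accepts) (hlen : Fintype.card σ ≤ w.length) :
    ∃ w' : List α, w' ∈ M.accepts ∧ w'.Sublist w ∧ w'.length < w.length ∧
      w.length ≤ w'.length + Fintype.card σ := by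
  obtain ⟨a, b, c, rfl, hab, hbne, hsub⟩ := M.pumping_lemma hw hlen
  refine ⟨a ++ c, ?_, ?_, ?_, ?_⟩
  · apply hsub
    refine ⟨a ++ [], ⟨a, rfl, [], ?_, rfl⟩, c, rfl, by simp⟩
    exact Language.nil_mem_kstar _
  · exact (a.sublist_append_left b).append_right c
  · simp only [List.length_append]
    have : 0 < b.length := List.length_pos_iff.mpr hbne
    omega
  · simp only [List.length_append]
    omega

private lemma aux {α σ : Type*} [Fintype σ] (M : DFA α σ) (h1 : 1 ≤ Fintype.card σ) :
    ∀ k : ℕ, ∀ w : List α, w.length ≤ k → w ∈ M.accepts → Fintype.card σ ≤ w.length →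
    ∃ u w' : List α, u.Sublist w' ∧ u ≠ w' ∧ u ∈ M.accepts ∧ w' ∈ M.accepts ∧
      w'.length ≤ 2 * Fintype.card σ - 1 := by
  intro k
  induction k with
  | zero => intro w hk _ hlen; omega
  | succ k ih =>
    intro w hk hw hlen
    obtain ⟨w', hw', hsub, hlt, hge⟩ := pump_down M hw hlen
    by_cases hshort : w.length ≤ 2 * Fintype.card σ - 1
    · exact ⟨w', w, hsub, fun e => by simp [e] at hlt, hw', hw, hshort⟩
    · exact ih w' (by omega) hw' (by omega)

theorem nonSubwordFree_short_witness {α σ : Type*} [Fintype σ] (M : DFA α σ) (n : ℕ)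
    (hn : Fintype.card σ = n) (h2 : 2 ≤ n) (h : ¬ SubwordFree M.accepts) :
    ∃ u w : List α, u.Sublist w ∧ u ≠ w ∧ u ∈ M.accepts ∧ w ∈ M.accepts ∧
      w.length ≤ 2 * n - 1 := by
  simp only [SubwordFree, not_forall] at h
  obtain ⟨u, hu, w, hw, hsub, hne⟩ := h
  by_cases hshort : w.length ≤ 2 * n - 1
  · exact ⟨u, w, hsub, hne, hu, hw, hshort⟩
  · have := aux M (by omega) w.length w le_rfl hw (by omega)
    rw [hn] at this
    exact this
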